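/- arXiv:1810.06648 — 10 statements merged into one kernel-verified Lean document; each statement's English description precedes it below -/
import Mathlib

section
/- A density matrix ρ is a dark state, i.e. L(ρ) = 0 and ρ = PρP, if and only if H̃ρ − ρH̃ᴴ = 0 (where H̃ = H − i·Γ and H̃ᴴ is its conjugate transpose). In other words, the dark states are exactly the density matrices annihilated by the non-Hermitian part L_H̃(ρ) = −i(H̃ρ − ρH̃ᴴ) of the Lindblad generator. -/
open Matrix Complex BigOperators ComplexOrder

/-- Projection onto the ground-state indices. -/
noncomputable def Pg (Ng Ne : ℕ) : Matrix (Fin Ng ⊕ Fin Ne) (Fin Ng ⊕ Fin Ne) ℂ :=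
  Matrix.diagonal (Sum.elim (fun _ => 1) (fun _ => 0))

/-- Jump operator |g_i⟩⟨e_j|. -/
noncomputable def jump (Ng Ne : ℕ) (i : Fin Ng) (j : Fin Ne) :
    Matrix (Fin Ng ⊕ Fin Ne) (Fin Ng ⊕ Fin Ne) ℂ :=
  Matrix.single (Sum.inl i) (Sum.inr j) 1

/-- Decay operator Γ = Σ γ_{ij} σ_{ij}ᴴ σ_{ij}. -/
noncomputable def Gam (Ng Ne : ℕ) (γ : Fin Ng → Fin Ne → ℝ) :
    Matrix (Fin Ng ⊕ Fin Ne) (Fin Ng ⊕ Fin Ne) ℂ :=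
  ∑ i, ∑ j, (γ i j : ℂ) • ((jump Ng Ne i j)ᴴ * jump Ng Ne i j)

/-- The Lindblad generator. -/
noncomputable def Lindblad (Ng Ne : ℕ) (H : Matrix (Fin Ng ⊕ Fin Ne) (Fin Ng ⊕ Fin Ne) ℂ)
    (γ : Fin Ng → Fin Ne → ℝ) (ρ : Matrix (Fin Ng ⊕ Fin Ne) (Fin Ng ⊕ Fin Ne) ℂ) :
    Matrix (Fin Ng ⊕ Fin Ne) (Fin Ng ⊕ Fin Ne) ℂ :=
  (-Complex.I) • (H * ρ - ρ * H) +
    ∑ i, ∑ j, (γ i j : ℂ) •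
      (jump Ng Ne i j * ρ * (jump Ng Ne i j)ᴴ -
        (1 / 2 : ℂ) • ((jump Ng Ne i j)ᴴ * jump Ng Ne i j * ρ +
          ρ * ((jump Ng Ne i j)ᴴ * jump Ng Ne i j)))

lemma jump_dag_mul (Ng Ne : ℕ) (i : Fin Ng) (j : Fin Ne) :
    (jump Ng Ne i j)ᴴ * jump Ng Ne i j
      = Matrix.single (Sum.inr j) (Sum.inr j) (1:ℂ) := by
  ext a b
  simp [jump, Matrix.mul_apply, Matrix.single, Matrix.conjTranspose_apply, ite_and]
  split <;> split <;> simp_all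

lemma Gam_eq (Ng Ne : ℕ) (γ : Fin Ng → Fin Ne → ℝ) :
    Gam Ng Ne γ = Matrix.diagonal
      (Sum.elim (fun _ => (0:ℂ)) (fun j => ((∑ i, γ i j : ℝ) : ℂ))) := by
  simp only [Gam, jump_dag_mul]
  ext a b
  rcases a with a | a <;> rcases b with b | b <;>
    simp [Matrix.sum_apply, Matrix.single, Matrix.diagonal, ite_and, Finset.sum_ite_eq,
      Sum.inr.injEq, eq_comm]

lemma diag_nonneg' {n : Type*} [Fintype n] [DecidableEq n]
    {ρ : Matrix n n ℂ} (hρ : ρ.PosSemidef) (a : n) : 0 ≤ ρ a a := by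
  have := hρ.dotProduct_mulVec_nonneg (Pi.single a 1)
  simpa [dotProduct, Matrix.mulVec_single, Pi.single_apply, Finset.sum_ite_eq,
    Pi.single_star] using this

lemma row_col_zero' {n : Type*} [Fintype n] [DecidableEq n]
    {ρ : Matrix n n ℂ} (hρ : ρ.PosSemidef) (a : n) (h : ρ a a = 0) (b : n) :
    ρ b a = 0 ∧ ρ a b = 0 := by
  have hx : star (Pi.single a (1:ℂ)) ⬝ᵥ ρ *ᵥ (Pi.single a 1) = 0 := by
    simpa [dotProduct, Matrix.mulVec_single, Pi.single_apply, Finset.sum_ite_eq] using h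
  have h0 := (hρ.dotProduct_mulVec_zero_iff (Pi.single a 1)).mp hx
  have hcol : ρ b a = 0 := by
    have := congrFun h0 b
    simpa [Matrix.mulVec_single] using this
  exact ⟨hcol, by have := hρ.1; rw [← this.apply a b, hcol]; simp⟩

theorem dark_state_iff_nonhermitian_kernel
    (Ng Ne : ℕ) (hNg : 1 ≤ Ng) (hNe : 1 ≤ Ne)
    (H : Matrix (Fin Ng ⊕ Fin Ne) (Fin Ng ⊕ Fin Ne) ℂ) (hH : H.IsHermitian)
    (γ : Fin Ng → Fin Ne → ℝ) (hγ : ∀ i j, 0 ≤ γ i j)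
    (hγpos : ∀ j, 0 < ∑ i, γ i j)
    (ρ : Matrix (Fin Ng ⊕ Fin Ne) (Fin Ng ⊕ Fin Ne) ℂ)
    (hρ : ρ.PosSemidef) (htr : ρ.trace = 1) :
    (Lindblad Ng Ne H γ ρ = 0 ∧ ρ = Pg Ng Ne * ρ * Pg Ng Ne) ↔
      (H - Complex.I • Gam Ng Ne γ) * ρ - ρ * (H - Complex.I • Gam Ng Ne γ)ᴴ = 0 := by
  set d : Fin Ng ⊕ Fin Ne → ℂ :=
    Sum.elim (fun _ => (0:ℂ)) (fun j => ((∑ i, γ i j : ℝ) : ℂ)) with hd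
  have hGdiag : Gam Ng Ne γ = Matrix.diagonal d := Gam_eq Ng Ne γ
  have hGH : (Gam Ng Ne γ)ᴴ = Gam Ng Ne γ := by
    rw [hGdiag, Matrix.diagonal_conjTranspose]
    refine congrArg Matrix.diagonal (funext fun x => ?_)
    rcases x with x | x <;>
      simp [hd, star_sum, RCLike.star_def, Complex.conj_ofReal]
  -- Consequences of the support condition
  have key : ∀ (hz : ∀ j b, ρ (Sum.inr j) b = 0 ∧ ρ b (Sum.inr j) = 0),
      Gam Ng Ne γ * ρ = 0 ∧ ρ * Gam Ng Ne γ = 0 ∧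
      (∑ i, ∑ j, (γ i j : ℂ) •
        (jump Ng Ne i j * ρ * (jump Ng Ne i j)ᴴ -
          (1 / 2 : ℂ) • ((jump Ng Ne i j)ᴴ * jump Ng Ne i j * ρ +
            ρ * ((jump Ng Ne i j)ᴴ * jump Ng Ne i j)))) = 0 ∧
      ρ = Pg Ng Ne * ρ * Pg Ng Ne := by
    intro hz
    have hGρ : Gam Ng Ne γ * ρ = 0 := by
      rw [hGdiag]
      ext a b
      rcases a with a | a <;> simp [Matrix.diagonal_mul, hd, (hz _ _).1]
    have hρG : ρ * Gam Ng Ne γ = 0 := by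
      rw [hGdiag]
      ext a b
      rcases b with b | b <;> simp [Matrix.mul_diagonal, hd, (hz _ _).2]
    have hjρ : ∀ (i : Fin Ng) (j : Fin Ne), jump Ng Ne i j * ρ = 0 := by
      intro i j
      ext a b
      simp [jump, Matrix.mul_apply, Matrix.single, ite_and, (hz _ _).1]
    have hsρ : ∀ j : Fin Ne,
        Matrix.single (Sum.inr j) (Sum.inr j) (1:ℂ) * ρ = 0 := by
      intro j
      ext a b
      simp [Matrix.mul_apply, Matrix.single, ite_and, (hz _ _).1]
    have hρs : ∀ j : Fin Ne,
        ρ * Matrix.single (Sum.inr j) (Sum.inr j) (1:ℂ) = 0 := by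
      intro j
      ext a b
      simp [Matrix.mul_apply, Matrix.single, ite_and, (hz _ _).2]
    have hdiss : (∑ i, ∑ j, (γ i j : ℂ) •
        (jump Ng Ne i j * ρ * (jump Ng Ne i j)ᴴ -
          (1 / 2 : ℂ) • ((jump Ng Ne i j)ᴴ * jump Ng Ne i j * ρ +
            ρ * ((jump Ng Ne i j)ᴴ * jump Ng Ne i j)))) = 0 := by
      refine Finset.sum_eq_zero fun i _ => Finset.sum_eq_zero fun j _ => ?_
      rw [jump_dag_mul, hjρ, hsρ, hρs]
      simp
    have hPg : ρ = Pg Ng Ne * ρ * Pg Ng Ne := by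
      ext a b
      rcases a with a | a <;> rcases b with b | b <;>
        simp [Pg, Matrix.mul_diagonal, Matrix.diagonal_mul, (hz _ _).1, (hz _ _).2]
    exact ⟨hGρ, hρG, hdiss, hPg⟩
  constructor
  · rintro ⟨hL, hP⟩
    have hz : ∀ j b, ρ (Sum.inr j) b = 0 ∧ ρ b (Sum.inr j) = 0 := by
      intro j b
      constructor
      · have := congrFun (congrFun hP (Sum.inr j)) b
        simpa [Pg, Matrix.mul_diagonal, Matrix.diagonal_mul] using this
      · have := congrFun (congrFun hP b) (Sum.inr j)
        simpa [Pg, Matrix.mul_diagonal, Matrix.diagonal_mul] using this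
    obtain ⟨hGρ, hρG, hdiss, -⟩ := key hz
    have hC : H * ρ - ρ * H = 0 := by
      have : (-Complex.I) • (H * ρ - ρ * H) = 0 := by
        have := hL
        rw [Lindblad, hdiss, add_zero] at this
        exact this
      rcases smul_eq_zero.mp this with h | h
      · exact absurd (neg_eq_zero.mp h) Complex.I_ne_zero
      · exact h
    rw [Matrix.conjTranspose_sub, Matrix.conjTranspose_smul, hGH, hH, Matrix.sub_mul,
      Matrix.mul_sub, Matrix.smul_mul, Matrix.mul_smul, hGρ, hρG]
    simp only [smul_zero, sub_zero, Complex.star_def, Complex.conj_I, neg_smul, zero_sub,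
      sub_neg_eq_add]
    rw [sub_eq_zero.mp hC]
    abel
  · intro h
    -- trace argument: trace (Gam * ρ) = 0
    have hGH' : (Complex.I • Gam Ng Ne γ)ᴴ = (-Complex.I) • Gam Ng Ne γ := by
      rw [Matrix.conjTranspose_smul, hGH]
      simp [Complex.conj_I]
    have htrace : (Gam Ng Ne γ * ρ).trace = 0 := by
      have h0 : ((H - Complex.I • Gam Ng Ne γ) * ρ
          - ρ * (H - Complex.I • Gam Ng Ne γ)ᴴ).trace = 0 := by rw [h, Matrix.trace_zero]
      rw [Matrix.conjTranspose_sub, hGH', hH, Matrix.sub_mul, Matrix.mul_sub,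
        Matrix.trace_sub, Matrix.trace_sub, Matrix.trace_sub, Matrix.smul_mul,
        Matrix.mul_smul, Matrix.trace_smul, Matrix.trace_smul,
        Matrix.trace_mul_comm ρ H, Matrix.trace_mul_comm ρ (Gam Ng Ne γ)] at h0
      have : (-(2 * Complex.I)) * (Gam Ng Ne γ * ρ).trace = 0 := by
        rw [← h0]; simp only [smul_eq_mul]; ring
      rcases mul_eq_zero.mp this with h' | h'
      · exfalso
        have : (2 : ℂ) * Complex.I ≠ 0 := by
          simp [Complex.I_ne_zero]
        exact this (by linear_combination -h')
      · exact h'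
    -- diagonal entries on excited states vanish
    have hdiagz : ∀ j : Fin Ne, ρ (Sum.inr j) (Sum.inr j) = 0 := by
      have htr' : (∑ j : Fin Ne, ((∑ i, γ i j : ℝ) : ℂ) * ρ (Sum.inr j) (Sum.inr j)) = 0 := by
        have : (Gam Ng Ne γ * ρ).trace
            = ∑ j : Fin Ne, ((∑ i, γ i j : ℝ) : ℂ) * ρ (Sum.inr j) (Sum.inr j) := by
          rw [hGdiag]
          rw [Matrix.trace]
          simp [Matrix.diag, Matrix.diagonal_mul, hd, Fintype.sum_sum_type]
        rw [← this, htrace]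
      -- real parts
      have hre : ∀ a, ρ a a = ((ρ a a).re : ℂ) ∧ 0 ≤ (ρ a a).re := by
        intro a
        have := diag_nonneg' hρ a
        rw [Complex.le_def] at this
        exact ⟨Complex.ext rfl (by simpa using this.2.symm), by simpa using this.1⟩
      have htrR : (∑ j : Fin Ne, (∑ i, γ i j) * (ρ (Sum.inr j) (Sum.inr j)).re) = 0 := by
        have := htr'
        have heq : (∑ j : Fin Ne, ((∑ i, γ i j : ℝ) : ℂ) * ρ (Sum.inr j) (Sum.inr j))
            = (((∑ j : Fin Ne, (∑ i, γ i j) * (ρ (Sum.inr j) (Sum.inr j)).re : ℝ)) : ℂ) := by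
          push_cast
          refine Finset.sum_congr rfl fun j _ => ?_
          rw [(hre (Sum.inr j)).1]
          push_cast
          simp [Complex.ofReal_re]
        rw [heq] at this
        exact_mod_cast this
      intro j
      have hterm : ∀ j ∈ Finset.univ, 0 ≤ (∑ i, γ i j) * (ρ (Sum.inr j) (Sum.inr j)).re :=
        fun j _ => mul_nonneg (le_of_lt (hγpos j)) (hre (Sum.inr j)).2
      have := (Finset.sum_eq_zero_iff_of_nonneg hterm).mp htrR j (Finset.mem_univ j)
      have hrez : (ρ (Sum.inr j) (Sum.inr j)).re = 0 := by
        rcases mul_eq_zero.mp this with h' | h'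
        · exact absurd h' (ne_of_gt (hγpos j))
        · exact h'
      rw [(hre (Sum.inr j)).1, hrez]
      simp
    have hz : ∀ j b, ρ (Sum.inr j) b = 0 ∧ ρ b (Sum.inr j) = 0 := by
      intro j b
      have := row_col_zero' hρ (Sum.inr j) (hdiagz j) b
      exact ⟨this.2, this.1⟩
    obtain ⟨hGρ, hρG, hdiss, hPg⟩ := key hz
    have hC : H * ρ - ρ * H = 0 := by
      rw [Matrix.conjTranspose_sub, hGH', hH, Matrix.sub_mul, Matrix.mul_sub,
        Matrix.smul_mul, Matrix.mul_smul, hGρ, hρG] at h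
      simpa using h
    refine ⟨?_, hPg⟩
    rw [Lindblad, hdiss, hC]
    simp
end

section
/- If ρ is supported on the ground subspace, ρ = P ρ P, then every dissipative term vanishes on ρ: Σ_{i,j} γ i j ((σ i j) ρ (σ i j)ᴴ − (1/2)((σ i j)ᴴ(σ i j)ρ + ρ(σ i j)ᴴ(σ i j))) = 0, Γρ = 0 and ρΓ = 0; consequently L(ρ) = −i(Hρ − ρH) = −i(H̃ρ − ρH̃ᴴ). -/
open Matrix Complex BigOperators ComplexOrder

/-- Projection onto the excited-state indices. -/
noncomputable def Qe (Ng Ne : ℕ) : Matrix (Fin Ng ⊕ Fin Ne) (Fin Ng ⊕ Fin Ne) ℂ :=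
  1 - Pg Ng Ne

/-- A dark state: a density matrix annihilated by the Lindbladian and supported on the
ground-state subspace. -/
def IsDarkState (Ng Ne : ℕ) (H : Matrix (Fin Ng ⊕ Fin Ne) (Fin Ng ⊕ Fin Ne) ℂ)
    (γ : Fin Ng → Fin Ne → ℝ) (ρ : Matrix (Fin Ng ⊕ Fin Ne) (Fin Ng ⊕ Fin Ne) ℂ) : Prop :=
  ρ.PosSemidef ∧ ρ.trace = 1 ∧ Lindblad Ng Ne H γ ρ = 0 ∧ ρ = Pg Ng Ne * ρ * Pg Ng Ne
lemma jump_mul_Pg (Ng Ne : ℕ) (i : Fin Ng) (j : Fin Ne) :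
    jump Ng Ne i j * Pg Ng Ne = 0 := by
  ext a b
  rw [Pg, mul_diagonal]
  rcases b with b | b
  · simp [jump, Matrix.single]
  · simp [jump]

lemma Pg_mul_jumpH (Ng Ne : ℕ) (i : Fin Ng) (j : Fin Ne) :
    Pg Ng Ne * (jump Ng Ne i j)ᴴ = 0 := by
  ext a b
  rw [Pg, diagonal_mul]
  rcases a with a | a
  · simp [jump, Matrix.single, conjTranspose_apply]
  · simp [jump]

theorem dissipator_vanishes_on_ground_supported
    (Ng Ne : ℕ) (hNg : 1 ≤ Ng) (hNe : 1 ≤ Ne)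
    (H : Matrix (Fin Ng ⊕ Fin Ne) (Fin Ng ⊕ Fin Ne) ℂ) (hH : H.IsHermitian)
    (γ : Fin Ng → Fin Ne → ℝ) (hγ : ∀ i j, 0 ≤ γ i j)
    (ρ : Matrix (Fin Ng ⊕ Fin Ne) (Fin Ng ⊕ Fin Ne) ℂ)
    (hsupp : ρ = Pg Ng Ne * ρ * Pg Ng Ne) :
    (∑ i, ∑ j, (γ i j : ℂ) •
      (jump Ng Ne i j * ρ * (jump Ng Ne i j)ᴴ -
        (1 / 2 : ℂ) • ((jump Ng Ne i j)ᴴ * jump Ng Ne i j * ρ +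
          ρ * ((jump Ng Ne i j)ᴴ * jump Ng Ne i j))) = 0) ∧
    Gam Ng Ne γ * ρ = 0 ∧ ρ * Gam Ng Ne γ = 0 ∧
    Lindblad Ng Ne H γ ρ = (-Complex.I) • (H * ρ - ρ * H) ∧
    Lindblad Ng Ne H γ ρ =
      (-Complex.I) • ((H - Complex.I • Gam Ng Ne γ) * ρ -
        ρ * (H - Complex.I • Gam Ng Ne γ)ᴴ) := by
  have hjρ : ∀ i j, jump Ng Ne i j * ρ = 0 := by
    intro i j
    conv_lhs => rw [hsupp]
    simp only [← mul_assoc]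
    rw [jump_mul_Pg]; simp
  have hρj : ∀ i j, ρ * (jump Ng Ne i j)ᴴ = 0 := by
    intro i j
    conv_lhs => rw [hsupp]
    rw [mul_assoc, Pg_mul_jumpH]; simp
  have hsum : (∑ i, ∑ j, (γ i j : ℂ) •
      (jump Ng Ne i j * ρ * (jump Ng Ne i j)ᴴ -
        (1 / 2 : ℂ) • ((jump Ng Ne i j)ᴴ * jump Ng Ne i j * ρ +
          ρ * ((jump Ng Ne i j)ᴴ * jump Ng Ne i j))) = 0) := by
    refine Finset.sum_eq_zero fun i _ => Finset.sum_eq_zero fun j _ => ?_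
    have h1 : jump Ng Ne i j * ρ * (jump Ng Ne i j)ᴴ = 0 := by rw [hjρ]; simp
    have h2 : (jump Ng Ne i j)ᴴ * jump Ng Ne i j * ρ = 0 := by
      rw [mul_assoc, hjρ]; simp
    have h3 : ρ * ((jump Ng Ne i j)ᴴ * jump Ng Ne i j) = 0 := by
      rw [← mul_assoc, hρj]; simp
    rw [h1, h2, h3]; simp
  have hGρ : Gam Ng Ne γ * ρ = 0 := by
    rw [Gam, Finset.sum_mul]
    refine Finset.sum_eq_zero fun i _ => ?_
    rw [Finset.sum_mul]
    refine Finset.sum_eq_zero fun j _ => ?_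
    rw [smul_mul_assoc, mul_assoc, hjρ]; simp
  have hρG : ρ * Gam Ng Ne γ = 0 := by
    rw [Gam, Finset.mul_sum]
    refine Finset.sum_eq_zero fun i _ => ?_
    rw [Finset.mul_sum]
    refine Finset.sum_eq_zero fun j _ => ?_
    rw [mul_smul_comm, ← mul_assoc, hρj]; simp
  have hL : Lindblad Ng Ne H γ ρ = (-Complex.I) • (H * ρ - ρ * H) := by
    rw [Lindblad, hsum, add_zero]
  have hGH : (Gam Ng Ne γ)ᴴ = Gam Ng Ne γ := by
    rw [Gam]
    simp only [conjTranspose_sum, conjTranspose_smul, conjTranspose_mul,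
      conjTranspose_conjTranspose]
    refine Finset.sum_congr rfl fun i _ => Finset.sum_congr rfl fun j _ => ?_
    congr 1
    simp [Complex.conj_ofReal]
  refine ⟨hsum, hGρ, hρG, hL, ?_⟩
  rw [hL]
  congr 1
  have : (H - Complex.I • Gam Ng Ne γ)ᴴ = H + Complex.I • Gam Ng Ne γ := by
    rw [conjTranspose_sub, conjTranspose_smul, hGH, hH.eq]
    simp [sub_eq_add_neg]
  rw [this, sub_mul, mul_add, smul_mul_assoc, mul_smul_comm, hGρ, hρG]
  simp
end

section
/- Let ρ be a Hermitian matrix supported on the ground subspace, ρ = P ρ P, and let Γ be a Hermitian matrix supported on the excited subspace, Γ = Q Γ Q. Then H̃ρ − ρH̃ᴴ = 0 (with H̃ = H − i·Γ) if and only if both (PHP)ρ − ρ(PHP) = 0 and Q H P ρ = 0. -/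
open Matrix Complex BigOperators ComplexOrder

theorem nonhermitian_kernel_iff_projected_conditions
    (Ng Ne : ℕ)
    (H : Matrix (Fin Ng ⊕ Fin Ne) (Fin Ng ⊕ Fin Ne) ℂ) (hH : H.IsHermitian)
    (Γ : Matrix (Fin Ng ⊕ Fin Ne) (Fin Ng ⊕ Fin Ne) ℂ) (hΓ : Γ.IsHermitian)
    (hΓsupp : Γ = Qe Ng Ne * Γ * Qe Ng Ne)
    (ρ : Matrix (Fin Ng ⊕ Fin Ne) (Fin Ng ⊕ Fin Ne) ℂ) (hρ : ρ.IsHermitian)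
    (hsupp : ρ = Pg Ng Ne * ρ * Pg Ng Ne) :
    (H - Complex.I • Γ) * ρ - ρ * (H - Complex.I • Γ)ᴴ = 0 ↔
      ((Pg Ng Ne * H * Pg Ng Ne) * ρ - ρ * (Pg Ng Ne * H * Pg Ng Ne) = 0 ∧
        Qe Ng Ne * H * Pg Ng Ne * ρ = 0) := by
  set P := Pg Ng Ne with hP
  set Q := Qe Ng Ne with hQ
  have hPP : P * P = P := by
    rw [hP, Pg, diagonal_mul_diagonal]
    exact congrArg _ (funext fun x => by cases x <;> simp)
  have hQP : Q * P = 0 := by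
    rw [hQ, Qe, sub_mul, one_mul, hPP, sub_self]
  have hPQ : P * Q = 0 := by
    rw [hQ, Qe, mul_sub, mul_one, hPP, sub_self]
  have hPH : Pᴴ = P := by
    rw [hP, Pg, diagonal_conjTranspose]
    exact congrArg _ (funext fun x => by cases x <;> simp)
  have hQHc : Qᴴ = Q := by
    rw [hQ, Qe, conjTranspose_sub, conjTranspose_one, hPH]
  have hPρ : P * ρ = ρ := by
    conv_lhs => rw [hsupp]
    conv_rhs => rw [hsupp]
    rw [← mul_assoc, ← mul_assoc, hPP]
  have hρP : ρ * P = ρ := by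
    conv_lhs => rw [hsupp]
    conv_rhs => rw [hsupp]
    rw [mul_assoc (P * ρ) P P, hPP]
  have hQρ : Q * ρ = 0 := by
    rw [← hPρ, ← mul_assoc, hQP, zero_mul]
  have hρQ : ρ * Q = 0 := by
    rw [← hρP, mul_assoc, hPQ, mul_zero]
  have hΓρ : Γ * ρ = 0 := by
    rw [hΓsupp, mul_assoc, hQρ, mul_zero]
  have hρΓ : ρ * Γ = 0 := by
    rw [hΓsupp, ← mul_assoc, ← mul_assoc, hρQ, zero_mul, zero_mul]
  have hconj : (H - Complex.I • Γ)ᴴ = H + Complex.I • Γ := by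
    rw [conjTranspose_sub, conjTranspose_smul, hH.eq, hΓ.eq, Complex.star_def,
      Complex.conj_I, neg_smul, sub_neg_eq_add]
  have hM : (H - Complex.I • Γ) * ρ - ρ * (H - Complex.I • Γ)ᴴ = H * ρ - ρ * H := by
    rw [hconj, sub_mul, mul_add, smul_mul_assoc, mul_smul_comm, hΓρ, hρΓ,
      smul_zero, sub_zero, add_zero]
  rw [hM]
  have hone : (1 : Matrix (Fin Ng ⊕ Fin Ne) (Fin Ng ⊕ Fin Ne) ℂ) = P + Q := by
    rw [hQ, Qe, hP]; abel
  constructor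
  · intro h
    have h' : H * ρ = ρ * H := sub_eq_zero.mp h
    constructor
    · have e1 : (P * H * P) * ρ = ρ * H := by
        rw [mul_assoc, mul_assoc, hPρ, h', ← mul_assoc, hPρ]
      have e2 : ρ * (P * H * P) = H * ρ := by
        rw [← mul_assoc, ← mul_assoc, hρP, ← h', mul_assoc, hρP]
      rw [e1, e2, h', sub_self]
    · rw [mul_assoc, hPρ, mul_assoc, h', ← mul_assoc, hQρ, zero_mul]
  · rintro ⟨c1, c2⟩
    have hQHρ : Q * (H * ρ) = 0 := by
      rw [← hPρ, ← mul_assoc, ← mul_assoc]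
      exact c2
    have hρHQ : ρ * H * Q = 0 := by
      have := congrArg conjTranspose hQHρ
      simpa [conjTranspose_mul, hQHc, hH.eq, hρ.eq, mul_assoc] using this
    have h1 : H * ρ = P * H * P * ρ := by
      conv_lhs => rw [← one_mul (H * ρ), hone, add_mul, hQHρ, add_zero, ← hPρ]
      simp only [mul_assoc]
    have h2 : ρ * H = ρ * (P * H * P) := by
      conv_lhs => rw [← mul_one (ρ * H), hone, mul_add, hρHQ, add_zero, ← hρP]
      simp only [mul_assoc]
    rw [h1, h2]
    exact c1
end

section
/- A density matrix ρ is a dark state, i.e. L(ρ) = 0 and ρ = PρP, if and only if the following three conditions hold: ρ = P ρ P, (PHP)ρ − ρ(PHP) = 0, and Q H ρ = 0. -/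
open Matrix Complex BigOperators ComplexOrder

lemma Pg_mul_Pg (Ng Ne : ℕ) : Pg Ng Ne * Pg Ng Ne = Pg Ng Ne := by
  rw [Pg, Matrix.diagonal_mul_diagonal]
  have hv : (fun i => (Sum.elim (fun _ => (1:ℂ)) (fun _ => 0)) i *
      (Sum.elim (fun _ => (1:ℂ)) (fun _ => 0)) i)
      = (Sum.elim (fun _ => (1:ℂ)) (fun _ => 0) : Fin Ng ⊕ Fin Ne → ℂ) := by
    funext x; rcases x with x | x <;> simp
  rw [hv]

lemma Pg_herm (Ng Ne : ℕ) : (Pg Ng Ne)ᴴ = Pg Ng Ne := by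
  rw [Pg, Matrix.diagonal_conjTranspose]
  have hv : (star (Sum.elim (fun _ => (1:ℂ)) (fun _ => 0)) : Fin Ng ⊕ Fin Ne → ℂ)
      = Sum.elim (fun _ => (1:ℂ)) (fun _ => 0) := by
    funext x; rcases x with x | x <;> simp [Pi.star_apply]
  rw [hv]

lemma Qe_herm (Ng Ne : ℕ) : (Qe Ng Ne)ᴴ = Qe Ng Ne := by
  simp [Qe, Pg_herm]

lemma Qe_mul_Pg (Ng Ne : ℕ) : Qe Ng Ne * Pg Ng Ne = 0 := by
  simp [Qe, Matrix.sub_mul, Pg_mul_Pg]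

lemma Lindblad_of_supp (Ng Ne : ℕ) (H : Matrix (Fin Ng ⊕ Fin Ne) (Fin Ng ⊕ Fin Ne) ℂ)
    (γ : Fin Ng → Fin Ne → ℝ) (ρ : Matrix (Fin Ng ⊕ Fin Ne) (Fin Ng ⊕ Fin Ne) ℂ)
    (hsupp : ρ = Pg Ng Ne * ρ * Pg Ng Ne) :
    Lindblad Ng Ne H γ ρ = (-Complex.I) • (H * ρ - ρ * H) := by
  have hσρ : ∀ (i : Fin Ng) (j : Fin Ne), jump Ng Ne i j * ρ = 0 := by
    intro i j
    conv_lhs => rw [hsupp]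
    rw [← Matrix.mul_assoc, ← Matrix.mul_assoc, jump_mul_Pg, Matrix.zero_mul, Matrix.zero_mul]
  have hρσH : ∀ (i : Fin Ng) (j : Fin Ne), ρ * (jump Ng Ne i j)ᴴ = 0 := by
    intro i j
    conv_lhs => rw [hsupp]
    rw [Matrix.mul_assoc, Pg_mul_jumpH, Matrix.mul_zero]
  have hsum : (∑ i, ∑ j, (γ i j : ℂ) •
      (jump Ng Ne i j * ρ * (jump Ng Ne i j)ᴴ -
        (1 / 2 : ℂ) • ((jump Ng Ne i j)ᴴ * jump Ng Ne i j * ρ +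
          ρ * ((jump Ng Ne i j)ᴴ * jump Ng Ne i j)))) = 0 := by
    refine Finset.sum_eq_zero fun i _ => Finset.sum_eq_zero fun j _ => ?_
    have h3 : ρ * ((jump Ng Ne i j)ᴴ * jump Ng Ne i j) = 0 := by
      rw [← Matrix.mul_assoc, hρσH, Matrix.zero_mul]
    have h4 : (jump Ng Ne i j)ᴴ * jump Ng Ne i j * ρ = 0 := by
      rw [Matrix.mul_assoc, hσρ, Matrix.mul_zero]
    have h5 : jump Ng Ne i j * ρ * (jump Ng Ne i j)ᴴ = 0 := by
      rw [hσρ, Matrix.zero_mul]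
    rw [h3, h4, h5]
    simp
  rw [Lindblad, hsum, add_zero]

theorem dark_state_iff_commutes_and_QH_annihilates
    (Ng Ne : ℕ) (hNg : 1 ≤ Ng) (hNe : 1 ≤ Ne)
    (H : Matrix (Fin Ng ⊕ Fin Ne) (Fin Ng ⊕ Fin Ne) ℂ) (hH : H.IsHermitian)
    (γ : Fin Ng → Fin Ne → ℝ) (hγ : ∀ i j, 0 ≤ γ i j)
    (hγpos : ∀ j, 0 < ∑ i, γ i j)
    (ρ : Matrix (Fin Ng ⊕ Fin Ne) (Fin Ng ⊕ Fin Ne) ℂ)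
    (hρ : ρ.PosSemidef) (htr : ρ.trace = 1) :
    (Lindblad Ng Ne H γ ρ = 0 ∧ ρ = Pg Ng Ne * ρ * Pg Ng Ne) ↔
      (ρ = Pg Ng Ne * ρ * Pg Ng Ne ∧
        (Pg Ng Ne * H * Pg Ng Ne) * ρ - ρ * (Pg Ng Ne * H * Pg Ng Ne) = 0 ∧
        Qe Ng Ne * H * ρ = 0) := by
  
  have main : ρ = Pg Ng Ne * ρ * Pg Ng Ne →
      ((H * ρ - ρ * H = 0) ↔
        ((Pg Ng Ne * H * Pg Ng Ne) * ρ - ρ * (Pg Ng Ne * H * Pg Ng Ne) = 0 ∧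
          Qe Ng Ne * H * ρ = 0)) := by
    intro hsupp
    have hPρ : Pg Ng Ne * ρ = ρ := by
      conv_lhs => rw [hsupp]
      rw [← Matrix.mul_assoc, ← Matrix.mul_assoc, Pg_mul_Pg, ← hsupp]
    have hρP : ρ * Pg Ng Ne = ρ := by
      conv_lhs => rw [hsupp]
      rw [Matrix.mul_assoc, Matrix.mul_assoc, Pg_mul_Pg, ← Matrix.mul_assoc, ← hsupp]
    have hQρ : Qe Ng Ne * ρ = 0 := by
      conv_lhs => rw [hsupp]
      rw [← Matrix.mul_assoc, ← Matrix.mul_assoc, Qe_mul_Pg, Matrix.zero_mul, Matrix.zero_mul]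
    have A1 : Pg Ng Ne * H * Pg Ng Ne * ρ = Pg Ng Ne * H * ρ := by
      rw [Matrix.mul_assoc (Pg Ng Ne * H), hPρ]
    have A2 : ρ * (Pg Ng Ne * H * Pg Ng Ne) = ρ * H * Pg Ng Ne := by
      rw [← Matrix.mul_assoc, ← Matrix.mul_assoc, hρP]
    constructor
    · intro hcomm
      have hc : H * ρ = ρ * H := sub_eq_zero.mp hcomm
      constructor
      · rw [A1, A2, Matrix.mul_assoc, hc, ← Matrix.mul_assoc, hPρ, ← hc,
          Matrix.mul_assoc, hρP, sub_self]
      · rw [Matrix.mul_assoc, hc, ← Matrix.mul_assoc, hQρ, Matrix.zero_mul]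
    · rintro ⟨h1, h2⟩
      have hρHQ : ρ * H * Qe Ng Ne = 0 := by
        have := congrArg Matrix.conjTranspose h2
        simpa [Matrix.conjTranspose_mul, hρ.1.eq, hH.eq, Qe_herm, Matrix.mul_assoc] using this
      have hPQ : Pg Ng Ne + Qe Ng Ne = 1 := by simp [Qe]
      have hdecomp : H * ρ - ρ * H =
          ((Pg Ng Ne * H * Pg Ng Ne) * ρ - ρ * (Pg Ng Ne * H * Pg Ng Ne))
            + Qe Ng Ne * H * ρ - ρ * H * Qe Ng Ne := by
        calc H * ρ - ρ * H
            = (Pg Ng Ne + Qe Ng Ne) * H * ρ - ρ * H * (Pg Ng Ne + Qe Ng Ne) := by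
              rw [hPQ, Matrix.one_mul, Matrix.mul_one]
          _ = (Pg Ng Ne * H * ρ + Qe Ng Ne * H * ρ)
              - (ρ * H * Pg Ng Ne + ρ * H * Qe Ng Ne) := by
              rw [Matrix.add_mul, Matrix.add_mul, Matrix.mul_add]
          _ = ((Pg Ng Ne * H * Pg Ng Ne) * ρ - ρ * (Pg Ng Ne * H * Pg Ng Ne))
              + Qe Ng Ne * H * ρ - ρ * H * Qe Ng Ne := by
              rw [A1, A2]; abel
      rw [hdecomp, h1, h2, hρHQ]
      simp
  constructor
  · rintro ⟨hL, hsupp⟩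
    have hc : H * ρ - ρ * H = 0 := by
      rw [Lindblad_of_supp Ng Ne H γ ρ hsupp] at hL
      simpa [smul_eq_zero, neg_eq_zero, Complex.I_ne_zero] using hL
    exact ⟨hsupp, (main hsupp).mp hc⟩
  · rintro ⟨hsupp, h1, h2⟩
    refine ⟨?_, hsupp⟩
    rw [Lindblad_of_supp Ng Ne H γ ρ hsupp, (main hsupp).mpr ⟨h1, h2⟩, smul_zero]
end

section
/- Suppose the ground block of H is diagonal, H (inl i) (inl i') = 0 for i ≠ i', with diagonal entries 𝓔_i = H (inl i) (inl i) pairwise distinct, and suppose every ground state is coupled to the excited manifold: for every i : Fin Ng there exists j : Fin Ne with H (inl i) (inr j) ≠ 0. Then no dark state exists: there is no density matrix ρ with L(ρ) = 0 and ρ = P ρ P. -/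
open Matrix Complex BigOperators ComplexOrder

theorem no_dark_state_of_nondegenerate_ground_spectrum
    (Ng Ne : ℕ) (hNg : 1 ≤ Ng) (hNe : 1 ≤ Ne)
    (H : Matrix (Fin Ng ⊕ Fin Ne) (Fin Ng ⊕ Fin Ne) ℂ) (hH : H.IsHermitian)
    (hdiag : ∀ i i' : Fin Ng, i ≠ i' → H (Sum.inl i) (Sum.inl i') = 0)
    (hdistinct : ∀ i i' : Fin Ng, i ≠ i' →
      H (Sum.inl i) (Sum.inl i) ≠ H (Sum.inl i') (Sum.inl i'))
    (hcoupled : ∀ i : Fin Ng, ∃ j : Fin Ne, H (Sum.inl i) (Sum.inr j) ≠ 0)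
    (γ : Fin Ng → Fin Ne → ℝ) (hγ : ∀ i j, 0 ≤ γ i j)
    (hγpos : ∀ j, 0 < ∑ i, γ i j) :
    ¬ ∃ ρ : Matrix (Fin Ng ⊕ Fin Ne) (Fin Ng ⊕ Fin Ne) ℂ,
        ρ.PosSemidef ∧ ρ.trace = 1 ∧ Lindblad Ng Ne H γ ρ = 0 ∧
        ρ = Pg Ng Ne * ρ * Pg Ng Ne := by
  rintro ⟨ρ, hpsd, htr, hL, hsupp⟩
  have hherm : ρᴴ = ρ := hpsd.1
  -- entries with an excited row or column vanish
  have hzrow : ∀ (j : Fin Ne) b, ρ (Sum.inr j) b = 0 := by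
    intro j b
    have h := congrFun (congrFun hsupp (Sum.inr j)) b
    simpa [Pg, Matrix.diagonal_mul, Matrix.mul_diagonal] using h
  have hzcol : ∀ a (j : Fin Ne), ρ a (Sum.inr j) = 0 := by
    intro a j
    have h := congrFun (congrFun hsupp a) (Sum.inr j)
    simpa [Pg, Matrix.diagonal_mul, Matrix.mul_diagonal] using h
  -- jump * ρ = 0
  have hjρ : ∀ (i : Fin Ng) (j : Fin Ne), jump Ng Ne i j * ρ = 0 := by
    intro i j
    ext a b
    rcases eq_or_ne a (Sum.inl i) with rfl | h
    · rw [jump, Matrix.single_mul_apply_same, hzrow]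
      simp
    · rw [jump, Matrix.single_mul_apply_of_ne _ _ _ a b h]
      simp
  -- jumpᴴ = stdBasisMatrix (inr j) (inl i) 1
  have hjH : ∀ (i : Fin Ng) (j : Fin Ne),
      (jump Ng Ne i j)ᴴ = Matrix.single (Sum.inr j) (Sum.inl i) (1 : ℂ) := by
    intro i j
    ext a b
    simp only [jump, Matrix.conjTranspose_apply, Matrix.single, Matrix.of_apply]
    by_cases h1 : Sum.inl i = b ∧ Sum.inr j = a
    · rw [if_pos h1, if_pos ⟨h1.2, h1.1⟩]; exact star_one _
    · rw [if_neg h1, if_neg (fun h => h1 ⟨h.2, h.1⟩)]; exact star_zero _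
  have hσσ : ∀ (i : Fin Ng) (j : Fin Ne),
      (jump Ng Ne i j)ᴴ * jump Ng Ne i j
        = Matrix.single (Sum.inr j) (Sum.inr j) (1 : ℂ) := by
    intro i j
    rw [hjH]
    rw [show jump Ng Ne i j = Matrix.single (Sum.inl i) (Sum.inr j) (1 : ℂ) from rfl]
    rw [Matrix.single_mul_single_same, one_mul]
  have hσσρ : ∀ (i : Fin Ng) (j : Fin Ne), (jump Ng Ne i j)ᴴ * jump Ng Ne i j * ρ = 0 := by
    intro i j
    rw [hσσ]
    ext a b
    rcases eq_or_ne a (Sum.inr j) with rfl | h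
    · rw [Matrix.single_mul_apply_same, hzrow]
      simp
    · rw [Matrix.single_mul_apply_of_ne _ _ _ a b h]
      simp
  have hρσσ : ∀ (i : Fin Ng) (j : Fin Ne), ρ * ((jump Ng Ne i j)ᴴ * jump Ng Ne i j) = 0 := by
    intro i j
    have h1 : ((jump Ng Ne i j)ᴴ * jump Ng Ne i j)ᴴ = (jump Ng Ne i j)ᴴ * jump Ng Ne i j := by
      rw [Matrix.conjTranspose_mul, Matrix.conjTranspose_conjTranspose]
    calc ρ * ((jump Ng Ne i j)ᴴ * jump Ng Ne i j)
        = (((jump Ng Ne i j)ᴴ * jump Ng Ne i j)ᴴ * ρᴴ)ᴴ := by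
          rw [← Matrix.conjTranspose_mul, Matrix.conjTranspose_conjTranspose]
      _ = 0 := by rw [h1, hherm, hσσρ, Matrix.conjTranspose_zero]
  -- the commutator vanishes
  have hcomm : H * ρ = ρ * H := by
    have h := hL
    unfold Lindblad at h
    have hjj : ∀ (i : Fin Ng) (j : Fin Ne),
        jump Ng Ne i j * ρ * (jump Ng Ne i j)ᴴ = 0 := fun i j => by
      rw [hjρ, Matrix.zero_mul]
    simp only [hσσρ, hρσσ, hjj, add_zero, smul_zero, zero_add, sub_zero, zero_sub,
      neg_zero, Finset.sum_const_zero] at h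
    have h2 : H * ρ - ρ * H = 0 := by
      have := smul_eq_zero.mp h
      rcases this with h3 | h3
      · exact absurd h3 (by simp [Complex.I_ne_zero])
      · exact h3
    exact sub_eq_zero.mp h2
  -- ground off-diagonal entries vanish
  have hoff : ∀ i i' : Fin Ng, i ≠ i' → ρ (Sum.inl i) (Sum.inl i') = 0 := by
    intro i i' hne
    have h := congrFun (congrFun hcomm (Sum.inl i)) (Sum.inl i')
    rw [Matrix.mul_apply, Matrix.mul_apply, Fintype.sum_sum_type, Fintype.sum_sum_type] at h
    simp only [hzrow, hzcol, mul_zero, zero_mul, Finset.sum_const_zero, add_zero] at h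
    rw [Finset.sum_eq_single_of_mem i (Finset.mem_univ i)
        (fun b _ hb => by rw [hdiag i b hb.symm, zero_mul]),
      Finset.sum_eq_single_of_mem i' (Finset.mem_univ i')
        (fun b _ hb => by rw [hdiag b i' hb, mul_zero])] at h
    by_contra hρ
    exact hdistinct i i' hne (mul_right_cancel₀ hρ (h.trans (mul_comm _ _)))
  -- ground diagonal entries vanish
  have hdiag0 : ∀ i : Fin Ng, ρ (Sum.inl i) (Sum.inl i) = 0 := by
    intro i
    obtain ⟨j, hj⟩ := hcoupled i
    have h := congrFun (congrFun hcomm (Sum.inl i)) (Sum.inr j)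
    rw [Matrix.mul_apply, Matrix.mul_apply, Fintype.sum_sum_type, Fintype.sum_sum_type] at h
    simp only [hzrow, hzcol, mul_zero, zero_mul, Finset.sum_const_zero, add_zero,
      zero_add] at h
    rw [Finset.sum_eq_single_of_mem i (Finset.mem_univ i)
        (fun b _ hb => by rw [hoff i b hb.symm, zero_mul])] at h
    exact (mul_eq_zero.mp h.symm).resolve_right hj
  -- the trace is zero, contradiction
  have htr0 : ρ.trace = 0 := by
    simp [Matrix.trace, Matrix.diag, Fintype.sum_sum_type, hdiag0, hzrow]
  rw [htr0] at htr
  exact zero_ne_one htr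
end

section
/- (Case 1: the number of excited states does not constrain the couplings.) Let P_s be a Hermitian projection matrix with P P_s = P_s, P H P · P_s = 𝓔_s · P_s for some real number 𝓔_s, and rank(P_s) ≥ Ne + 1. Then, regardless of the values of the couplings (the off-diagonal blocks of H), there exists a unit vector ψ with P_s ψ = ψ and Q H ψ = 0, and ψψᴴ is a dark state: L(ψψᴴ) = 0 and ψψᴴ = P(ψψᴴ)P. -/
open Matrix Complex BigOperators ComplexOrder

section auxlemmas

variable {n : Type*} [Fintype n] [DecidableEq n]

lemma mul_vecMulVec' (M : Matrix n n ℂ) (u v : n → ℂ) :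
    M * vecMulVec u v = vecMulVec (M *ᵥ u) v := by
  ext a b
  simp [Matrix.mul_apply, Matrix.vecMulVec_apply, Matrix.mulVec, dotProduct,
    Finset.sum_mul, mul_assoc]

lemma vecMulVec_mul' (M : Matrix n n ℂ) (u v : n → ℂ) :
    vecMulVec u v * M = vecMulVec u (v ᵥ* M) := by
  ext a b
  simp [Matrix.mul_apply, Matrix.vecMulVec_apply, Matrix.vecMul, dotProduct,
    Finset.mul_sum, mul_assoc, mul_left_comm]

lemma smul_vecMulVec' (c : ℂ) (u v : n → ℂ) :
    vecMulVec (c • u) v = c • vecMulVec u v := by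
  ext a b
  simp [Matrix.vecMulVec_apply, mul_assoc]

end auxlemmas

theorem dark_state_exists_of_large_degenerate_subspace
    (Ng Ne : ℕ) (hNg : 1 ≤ Ng) (hNe : 1 ≤ Ne)
    (H : Matrix (Fin Ng ⊕ Fin Ne) (Fin Ng ⊕ Fin Ne) ℂ) (hH : H.IsHermitian)
    (γ : Fin Ng → Fin Ne → ℝ) (hγ : ∀ i j, 0 ≤ γ i j)
    (hγpos : ∀ j, 0 < ∑ i, γ i j)
    (Ps : Matrix (Fin Ng ⊕ Fin Ne) (Fin Ng ⊕ Fin Ne) ℂ)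
    (hPsHerm : Psᴴ = Ps) (hPsProj : Ps * Ps = Ps)
    (hPsSub : Pg Ng Ne * Ps = Ps)
    (𝓔 : ℝ) (hspec : Pg Ng Ne * H * Pg Ng Ne * Ps = (𝓔 : ℂ) • Ps)
    (hrank : Ne + 1 ≤ Ps.rank) :
    ∃ ψ : Fin Ng ⊕ Fin Ne → ℂ, star ψ ⬝ᵥ ψ = 1 ∧ Ps *ᵥ ψ = ψ ∧
      (Qe Ng Ne * H) *ᵥ ψ = 0 ∧
      Lindblad Ng Ne H γ (vecMulVec ψ (star ψ)) = 0 ∧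
      vecMulVec ψ (star ψ) = Pg Ng Ne * vecMulVec ψ (star ψ) * Pg Ng Ne := by
  classical
  -- the row `inl i` of `Qe * H` vanishes
  have hQe_inl : ∀ (c : Fin Ng ⊕ Fin Ne) (i : Fin Ng), Qe Ng Ne (Sum.inl i) c = 0 := by
    intro c i
    simp only [Qe, Pg, Matrix.sub_apply, Matrix.one_apply, Matrix.diagonal_apply]
    split
    · next h => subst h; simp
    · simp
  have hQrow : ∀ (w : Fin Ng ⊕ Fin Ne → ℂ) (i : Fin Ng),
      ((Qe Ng Ne * H) *ᵥ w) (Sum.inl i) = 0 := by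
    intro w i
    simp [Matrix.mulVec, dotProduct, Matrix.mul_apply, hQe_inl]
  -- find a nonzero vector in the range of Ps killed by Qe * H
  set S : Submodule ℂ (Fin Ng ⊕ Fin Ne → ℂ) := LinearMap.range Ps.mulVecLin with hS
  let f : S →ₗ[ℂ] (Fin Ne → ℂ) :=
    (LinearMap.funLeft ℂ ℂ Sum.inr).comp (((Qe Ng Ne * H).mulVecLin).comp S.subtype)
  have hninj : ¬ Function.Injective f := by
    intro hinj
    have h1 := LinearMap.finrank_le_finrank_of_injective hinj
    have h2 : Module.finrank ℂ (Fin Ne → ℂ) = Ne := by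
      simp [Module.finrank_fintype_fun_eq_card]
    have h3 : Module.finrank ℂ S = Ps.rank := rfl
    omega
  rw [← LinearMap.ker_eq_bot] at hninj
  obtain ⟨v, hvker, hvne⟩ := Submodule.exists_mem_ne_zero_of_ne_bot hninj
  have hfv : f v = 0 := hvker
  obtain ⟨x, hx⟩ := v.2
  set u : Fin Ng ⊕ Fin Ne → ℂ := (v : Fin Ng ⊕ Fin Ne → ℂ) with hu
  have hune : u ≠ 0 := fun h => hvne (Subtype.ext h)
  have hx' : Ps *ᵥ x = u := hx
  have hPsu : Ps *ᵥ u = u := by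
    rw [← hx', Matrix.mulVec_mulVec, hPsProj]
  have hQHu : (Qe Ng Ne * H) *ᵥ u = 0 := by
    funext a
    rcases a with i | j
    · exact hQrow u i
    · have := congrFun hfv j
      simpa [f, LinearMap.funLeft_apply, Matrix.mulVecLin_apply] using this
  -- normalize
  set r : ℝ := ∑ i, Complex.normSq (u i) with hr
  have hrpos : 0 < r := by
    obtain ⟨i, hi⟩ := Function.ne_iff.mp hune
    refine Finset.sum_pos' (fun _ _ => Complex.normSq_nonneg _)
      ⟨i, Finset.mem_univ i, Complex.normSq_pos.mpr hi⟩
  set c : ℝ := (Real.sqrt r)⁻¹ with hc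
  have hccr : c * c * r = 1 := by
    rw [hc, ← mul_inv, Real.mul_self_sqrt hrpos.le]
    exact inv_mul_cancel₀ hrpos.ne'
  set ψ : Fin Ng ⊕ Fin Ne → ℂ := (c : ℂ) • u with hψ
  have hsu : star u ⬝ᵥ u = (r : ℂ) := by
    rw [hr]
    push_cast
    simp [dotProduct, Complex.normSq_eq_conj_mul_self]
  have hnorm : star ψ ⬝ᵥ ψ = 1 := by
    rw [hψ, star_smul, smul_dotProduct, dotProduct_smul, hsu]
    simp only [smul_eq_mul, Complex.star_def, Complex.conj_ofReal]
    push_cast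
    norm_cast
    rw [← mul_assoc]
    exact hccr
  have hPsψ : Ps *ᵥ ψ = ψ := by
    rw [hψ, Matrix.mulVec_smul, hPsu]
  have hQHψ : (Qe Ng Ne * H) *ᵥ ψ = 0 := by
    rw [hψ, Matrix.mulVec_smul, hQHu, smul_zero]
  have hPgψ : Pg Ng Ne *ᵥ ψ = ψ := by
    conv_lhs => rw [← hPsψ]
    rw [Matrix.mulVec_mulVec, hPsSub, hPsψ]
  have hψinr : ∀ j, ψ (Sum.inr j) = 0 := by
    intro j
    have := congrFun hPgψ (Sum.inr j)
    simpa [Pg, Matrix.mulVec_diagonal] using this.symm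
  -- ψ is an eigenvector of H
  have hHψ : H *ᵥ ψ = (𝓔 : ℂ) • ψ := by
    have h1 : H *ᵥ ψ = (Pg Ng Ne * H) *ᵥ ψ := by
      have : (Qe Ng Ne * H) = H - Pg Ng Ne * H := by
        rw [Qe, Matrix.sub_mul, Matrix.one_mul]
      rw [this, Matrix.sub_mulVec, sub_eq_zero] at hQHψ
      exact hQHψ
    calc H *ᵥ ψ = (Pg Ng Ne * H) *ᵥ ψ := h1
      _ = (Pg Ng Ne * H) *ᵥ (Pg Ng Ne *ᵥ ψ) := by rw [hPgψ]
      _ = (Pg Ng Ne * H * Pg Ng Ne) *ᵥ (Ps *ᵥ ψ) := by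
          rw [Matrix.mulVec_mulVec, hPsψ]
      _ = (Pg Ng Ne * H * Pg Ng Ne * Ps) *ᵥ ψ := by rw [Matrix.mulVec_mulVec]
      _ = ((𝓔 : ℂ) • Ps) *ᵥ ψ := by rw [hspec]
      _ = (𝓔 : ℂ) • ψ := by rw [Matrix.smul_mulVec, hPsψ]
  have hψH : star ψ ᵥ* H = (𝓔 : ℂ) • star ψ := by
    have h := congrArg star hHψ
    rw [Matrix.star_mulVec, hH.eq] at h
    rw [h, star_smul]
    simp [Complex.star_def, Complex.conj_ofReal]
  set ρ : Matrix (Fin Ng ⊕ Fin Ne) (Fin Ng ⊕ Fin Ne) ℂ := vecMulVec ψ (star ψ) with hρ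
  have hmul_left : ∀ A : Matrix (Fin Ng ⊕ Fin Ne) (Fin Ng ⊕ Fin Ne) ℂ,
      A *ᵥ ψ = 0 → A * ρ = 0 := by
    intro A hA
    rw [hρ, mul_vecMulVec', hA]
    ext a b
    simp [Matrix.vecMulVec_apply]
  have hmul_right : ∀ A : Matrix (Fin Ng ⊕ Fin Ne) (Fin Ng ⊕ Fin Ne) ℂ,
      star ψ ᵥ* A = 0 → ρ * A = 0 := by
    intro A hA
    rw [hρ, vecMulVec_mul', hA]
    ext a b
    simp [Matrix.vecMulVec_apply]
  -- the Hamiltonian part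
  have hcomm : H * ρ - ρ * H = 0 := by
    rw [hρ, mul_vecMulVec', vecMulVec_mul', hHψ, hψH, smul_vecMulVec']
    rw [sub_eq_zero]
    ext a b
    simp [Matrix.vecMulVec_apply, Pi.smul_apply, smul_eq_mul]
    ring
  -- the dissipator part
  have hdiss : ∀ (i : Fin Ng) (j : Fin Ne),
      jump Ng Ne i j * ρ * (jump Ng Ne i j)ᴴ -
        (1 / 2 : ℂ) • ((jump Ng Ne i j)ᴴ * jump Ng Ne i j * ρ +
          ρ * ((jump Ng Ne i j)ᴴ * jump Ng Ne i j)) = 0 := by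
    intro i j
    have hconj : (jump Ng Ne i j)ᴴ = Matrix.single (Sum.inr j) (Sum.inl i) 1 := by
      ext a b
      simp [jump, Matrix.conjTranspose_apply, Matrix.single, and_comm]
    have hEHE : (jump Ng Ne i j)ᴴ * jump Ng Ne i j =
        Matrix.single (Sum.inr j) (Sum.inr j) 1 := by
      rw [hconj, jump, Matrix.single_mul_single_same, one_mul]
    have hEψ : jump Ng Ne i j *ᵥ ψ = 0 := by
      funext a
      simp [jump, Matrix.mulVec, dotProduct, Matrix.single, ite_and,
        hψinr]
    have hDψ : (Matrix.single (Sum.inr j) (Sum.inr j) (1 : ℂ) : Matrix (Fin Ng ⊕ Fin Ne) (Fin Ng ⊕ Fin Ne) ℂ) *ᵥ ψ = 0 := by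
      funext a
      simp [Matrix.mulVec, dotProduct, Matrix.single, ite_and, hψinr]
    have hψD : star ψ ᵥ* (Matrix.single (Sum.inr j) (Sum.inr j) (1 : ℂ) : Matrix (Fin Ng ⊕ Fin Ne) (Fin Ng ⊕ Fin Ne) ℂ) = 0 := by
      funext b
      simp [Matrix.vecMul, dotProduct, Matrix.single, ite_and, hψinr]
    rw [hmul_left _ hEψ, hEHE, hmul_left _ hDψ, hmul_right _ hψD]
    simp
  refine ⟨ψ, hnorm, hPsψ, hQHψ, ?_, ?_⟩
  · rw [Lindblad, ← hρ, hcomm]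
    simp only [smul_zero, zero_add]
    refine Finset.sum_eq_zero fun i _ => Finset.sum_eq_zero fun j _ => ?_
    rw [hdiss i j, smul_zero]
  · have hstarP : star ψ ᵥ* Pg Ng Ne = star ψ := by
      funext b
      rcases b with a | a
      · simp [Pg, Matrix.vecMul_diagonal]
      · simp [Pg, Matrix.vecMul_diagonal, hψinr]
    rw [← hρ, hρ, mul_vecMulVec', vecMulVec_mul', hPgψ, hstarP]
end

section
/- If any dark state exists, then a pure dark state exists: there is a unit vector ψ with P ψ = ψ such that ψψᴴ is a dark state (L(ψψᴴ) = 0 and ψψᴴ = P(ψψᴴ)P). -/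
open Matrix Complex BigOperators ComplexOrder

/-- A dark state: a density matrix annihilated by the Lindbladian and supported on the
ground-state subspace. -/

lemma row0 {Ng Ne : ℕ} {M : Matrix (Fin Ng ⊕ Fin Ne) (Fin Ng ⊕ Fin Ne) ℂ}
    (hM : M = Pg Ng Ne * M * Pg Ng Ne) (j : Fin Ne) (y) : M (Sum.inr j) y = 0 := by
  conv_lhs => rw [hM]
  simp [Pg, Matrix.diagonal_mul, Matrix.mul_diagonal]

lemma col0 {Ng Ne : ℕ} {M : Matrix (Fin Ng ⊕ Fin Ne) (Fin Ng ⊕ Fin Ne) ℂ}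
    (hM : M = Pg Ng Ne * M * Pg Ng Ne) (x) (j : Fin Ne) : M x (Sum.inr j) = 0 := by
  conv_lhs => rw [hM]
  simp [Pg, Matrix.diagonal_mul, Matrix.mul_diagonal]

lemma jump_mul_zero {Ng Ne : ℕ} {M : Matrix (Fin Ng ⊕ Fin Ne) (Fin Ng ⊕ Fin Ne) ℂ}
    (hM : M = Pg Ng Ne * M * Pg Ng Ne) (i : Fin Ng) (j : Fin Ne) :
    jump Ng Ne i j * M = 0 := by
  ext a b
  by_cases h : a = Sum.inl i
  · subst h
    rw [jump, Matrix.single_mul_apply_same, row0 hM]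
    simp
  · rw [jump, Matrix.single_mul_apply_of_ne _ _ _ _ _ h]
    simp

lemma jumpH (Ng Ne : ℕ) (i : Fin Ng) (j : Fin Ne) :
    (jump Ng Ne i j)ᴴ = Matrix.single (Sum.inr j) (Sum.inl i) 1 := by
  ext a b
  simp only [jump, Matrix.single, Matrix.conjTranspose_apply, Matrix.of_apply]
  by_cases h1 : Sum.inl i = b <;> by_cases h2 : Sum.inr j = a <;> simp [h1, h2]

lemma mul_jumpH_zero {Ng Ne : ℕ} {M : Matrix (Fin Ng ⊕ Fin Ne) (Fin Ng ⊕ Fin Ne) ℂ}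
    (hM : M = Pg Ng Ne * M * Pg Ng Ne) (i : Fin Ng) (j : Fin Ne) :
    M * (jump Ng Ne i j)ᴴ = 0 := by
  rw [jumpH]
  ext a b
  by_cases h : b = Sum.inl i
  · subst h
    rw [Matrix.mul_single_apply_same, col0 hM]
    simp
  · rw [Matrix.mul_single_apply_of_ne _ _ _ _ _ h]
    simp


lemma lindblad_supported {Ng Ne : ℕ} (H : Matrix (Fin Ng ⊕ Fin Ne) (Fin Ng ⊕ Fin Ne) ℂ)
    (γ : Fin Ng → Fin Ne → ℝ) {M : Matrix (Fin Ng ⊕ Fin Ne) (Fin Ng ⊕ Fin Ne) ℂ}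
    (hM : M = Pg Ng Ne * M * Pg Ng Ne) :
    Lindblad Ng Ne H γ M = (-Complex.I) • (H * M - M * H) := by
  have hz : ∀ (i : Fin Ng) (j : Fin Ne),
      (γ i j : ℂ) • (jump Ng Ne i j * M * (jump Ng Ne i j)ᴴ -
        (1 / 2 : ℂ) • ((jump Ng Ne i j)ᴴ * jump Ng Ne i j * M +
          M * ((jump Ng Ne i j)ᴴ * jump Ng Ne i j))) = 0 := by
    intro i j
    have h1 := jump_mul_zero hM i j
    have h2 := mul_jumpH_zero hM i j
    rw [h1, mul_assoc, h1, ← mul_assoc, h2]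
    simp
  rw [Lindblad]
  rw [Finset.sum_eq_zero (fun i _ => Finset.sum_eq_zero (fun j _ => hz i j)), add_zero]


theorem pure_dark_state_exists_of_dark_state_exists
    (Ng Ne : ℕ) (hNg : 1 ≤ Ng) (hNe : 1 ≤ Ne)
    (H : Matrix (Fin Ng ⊕ Fin Ne) (Fin Ng ⊕ Fin Ne) ℂ) (hH : H.IsHermitian)
    (γ : Fin Ng → Fin Ne → ℝ) (hγ : ∀ i j, 0 ≤ γ i j)
    (hγpos : ∀ j, 0 < ∑ i, γ i j)
    (hexists : ∃ ρ : Matrix (Fin Ng ⊕ Fin Ne) (Fin Ng ⊕ Fin Ne) ℂ,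
      IsDarkState Ng Ne H γ ρ) :
    ∃ ψ : Fin Ng ⊕ Fin Ne → ℂ, star ψ ⬝ᵥ ψ = 1 ∧ Pg Ng Ne *ᵥ ψ = ψ ∧
      IsDarkState Ng Ne H γ (vecMulVec ψ (star ψ)) := by
  obtain ⟨ρ, hpsd0, htr, hL, hsupp⟩ := hexists
  -- Pg * Pg = Pg
  have hPP : Pg Ng Ne * Pg Ng Ne = Pg Ng Ne := by
    ext a b
    rcases a with a | a <;> rcases b with b | b <;>
      simp [Pg, Matrix.diagonal_mul_diagonal, Matrix.diagonal_apply]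
  have hPρ : Pg Ng Ne * ρ = ρ := by
    conv_lhs => rw [hsupp, ← mul_assoc, ← mul_assoc, hPP]
    exact hsupp.symm
  -- H commutes with ρ
  have hcomm : H * ρ = ρ * H := by
    rw [lindblad_supported H γ hsupp] at hL
    rcases smul_eq_zero.mp hL with h | h
    · exact absurd (neg_eq_zero.mp h) I_ne_zero
    · exact sub_eq_zero.mp h
  -- the range of ρ
  set S : Submodule ℂ (Fin Ng ⊕ Fin Ne → ℂ) := LinearMap.range ρ.mulVecLin with hSdef
  have hS0 : S ≠ ⊥ := by
    intro h
    have h0 : ρ.mulVecLin = 0 := LinearMap.range_eq_bot.mp h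
    have hρ0 : ρ = 0 := by
      ext x y
      have h1 : ρ *ᵥ Pi.single y 1 = 0 := by
        have := LinearMap.congr_fun h0 (Pi.single y 1)
        simpa [Matrix.mulVecLin_apply] using this
      have h2 := congrFun h1 x
      simpa [Matrix.mulVec_single] using h2
    rw [hρ0] at htr
    simp [Matrix.trace] at htr
  haveI : Nontrivial S := Submodule.nontrivial_iff_ne_bot.mpr hS0
  have hinv : ∀ v ∈ S, H.mulVecLin v ∈ S := by
    rintro v ⟨u, rfl⟩
    refine ⟨H *ᵥ u, ?_⟩
    simp only [Matrix.mulVecLin_apply, Matrix.mulVec_mulVec, hcomm]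
  obtain ⟨μ, hμ⟩ := Module.End.exists_eigenvalue (H.mulVecLin.restrict hinv)
  obtain ⟨w', hw'⟩ := hμ.exists_hasEigenvector
  set w : Fin Ng ⊕ Fin Ne → ℂ := (w' : Fin Ng ⊕ Fin Ne → ℂ) with hwdef
  have hw0 : w ≠ 0 := fun h => hw'.2 (Subtype.coe_injective (by rw [hwdef] at h; simpa using h))
  have hweig : H *ᵥ w = μ • w := by
    have := hw'.apply_eq_smul
    have h2 := congrArg (Subtype.val) this
    rw [LinearMap.restrict_coe_apply] at h2
    simpa [Matrix.mulVecLin_apply] using h2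
  have hPw : Pg Ng Ne *ᵥ w = w := by
    obtain ⟨u, hu⟩ := w'.2
    have hu' : ρ *ᵥ u = w := by simpa [Matrix.mulVecLin_apply] using hu
    rw [← hu', Matrix.mulVec_mulVec, hPρ]
  -- norm of w
  set t : ℝ := ∑ x, Complex.normSq (w x) with htdef
  have hn : star w ⬝ᵥ w = (t : ℂ) := by
    rw [htdef]
    push_cast
    simp [dotProduct, Complex.normSq_eq_conj_mul_self, Pi.star_apply, Complex.mul_conj']
  have ht : 0 < t := by
    obtain ⟨x, hx⟩ := Function.ne_iff.mp hw0
    exact Finset.sum_pos' (fun y _ => Complex.normSq_nonneg _)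
      ⟨x, Finset.mem_univ x, Complex.normSq_pos.mpr hx⟩
  have hn_ne : star w ⬝ᵥ w ≠ 0 := by
    rw [hn]
    exact_mod_cast ht.ne'
  -- μ is real
  have hμreal : star μ = μ := by
    have e1 : star w ⬝ᵥ (H *ᵥ w) = μ * (star w ⬝ᵥ w) := by
      rw [hweig, dotProduct_smul, smul_eq_mul]
    have e2 : star w ⬝ᵥ (H *ᵥ w) = star μ * (star w ⬝ᵥ w) := by
      rw [dotProduct_mulVec]
      have hsw : star w ᵥ* H = star μ • star w := by
        have : star (H *ᵥ w) = star w ᵥ* Hᴴ := Matrix.star_mulVec H w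
        rw [hH.eq] at this
        rw [← this, hweig, star_smul]
      rw [hsw, smul_dotProduct, smul_eq_mul]
    exact mul_right_cancel₀ hn_ne (e2.symm.trans e1)
  -- normalized vector
  set c : ℝ := (Real.sqrt t)⁻¹ with hcdef
  set ψ : Fin Ng ⊕ Fin Ne → ℂ := (c : ℂ) • w with hψdef
  have hψnorm : star ψ ⬝ᵥ ψ = 1 := by
    rw [hψdef, star_smul, smul_dotProduct, dotProduct_smul, hn]
    simp only [smul_eq_mul, Complex.star_def, Complex.conj_ofReal]
    rw [← Complex.ofReal_mul, ← Complex.ofReal_mul]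
    norm_cast
    rw [hcdef]
    rw [← Real.sqrt_inv]
    rw [← mul_assoc, ← Real.sqrt_mul_self (by positivity : (0:ℝ) ≤ t⁻¹)]
    field_simp
    rw [Real.sq_sqrt (Real.sqrt_nonneg _), one_div, Real.sqrt_inv, Real.sqrt_sq ht.le,
      mul_inv_cancel₀ ht.ne']
  have hPψ : Pg Ng Ne *ᵥ ψ = ψ := by
    rw [hψdef, Matrix.mulVec_smul, hPw]
  have hψeig : H *ᵥ ψ = μ • ψ := by
    rw [hψdef, Matrix.mulVec_smul, hweig, smul_comm]
  have hψ0 : ∀ j : Fin Ne, ψ (Sum.inr j) = 0 := by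
    intro j
    have := congrFun hPψ (Sum.inr j)
    rw [Pg, Matrix.mulVec_diagonal] at this
    simpa using this.symm
  set ρ' := Matrix.vecMulVec ψ (star ψ) with hρ'def
  have hsupp' : ρ' = Pg Ng Ne * ρ' * Pg Ng Ne := by
    ext a b
    rw [hρ'def]
    rcases a with a | a <;> rcases b with b | b <;>
      simp [Pg, Matrix.diagonal_mul, Matrix.mul_diagonal, Matrix.vecMulVec_apply, hψ0]
  have hpsd : ρ'.PosSemidef := by
    rw [hρ'def, Matrix.vecMulVec_eq Unit, ← Matrix.conjTranspose_replicateCol]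
    exact Matrix.posSemidef_self_mul_conjTranspose _
  have htr' : ρ'.trace = 1 := by
    rw [hρ'def, ← hψnorm]
    simp [Matrix.trace, Matrix.diag, Matrix.vecMulVec_apply, dotProduct, mul_comm]
  have hHρ' : H * ρ' = μ • ρ' := by
    ext a b
    rw [hρ'def]
    simp only [Matrix.mul_apply, Matrix.vecMulVec_apply, Matrix.smul_apply, smul_eq_mul]
    have : ∑ z, H a z * ψ z = (H *ᵥ ψ) a := rfl
    rw [show ∑ z, H a z * (ψ z * star ψ b) = (∑ z, H a z * ψ z) * star ψ b by
      rw [Finset.sum_mul]; exact Finset.sum_congr rfl fun z _ => (mul_assoc _ _ _).symm]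
    rw [this, hψeig]
    simp [mul_assoc]
  have hρ'H : ρ' * H = μ • ρ' := by
    have hsH : star ψ ᵥ* H = μ • star ψ := by
      have h1 : star (H *ᵥ ψ) = star ψ ᵥ* Hᴴ := Matrix.star_mulVec H ψ
      rw [hH.eq] at h1
      rw [← h1, hψeig, star_smul, hμreal]
    ext a b
    rw [hρ'def]
    simp only [Matrix.mul_apply, Matrix.vecMulVec_apply, Matrix.smul_apply, smul_eq_mul]
    have h2 : ∑ z, ψ a * star ψ z * H z b = ψ a * ((star ψ ᵥ* H) b) := by
      rw [Matrix.vecMul, dotProduct, Finset.mul_sum]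
      exact Finset.sum_congr rfl fun z _ => (mul_assoc _ _ _)
    rw [h2, hsH]
    simp only [Pi.smul_apply, smul_eq_mul]
    ring
  have hL' : Lindblad Ng Ne H γ ρ' = 0 := by
    rw [lindblad_supported H γ hsupp', hHρ', hρ'H, sub_self, smul_zero]
  exact ⟨ψ, hψnorm, hPψ, hpsd, htr', hL', hsupp'⟩
end

section
/- (Rabi-frequency-conditioned dark state for two ground and two excited states.) Let Ng = Ne = 2 and let H be the Hermitian matrix whose ground 2×2 block is zero, whose excited 2×2 block is diagonal with real entries 𝓔₃, 𝓔₄, and whose coupling block has entries H (inl i) (inr j) = V i j ∈ ℂ (so H (inr j) (inl i) = conj(V i j)). Then a dark state exists — i.e. there is a density matrix ρ with L(ρ) = 0 and ρ = PρP — if and only if V 1 1 · V 2 2 = V 1 2 · V 2 1. -/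
open Matrix Complex BigOperators ComplexOrder

lemma supp_of_proj (ρ : Matrix (Fin 2 ⊕ Fin 2) (Fin 2 ⊕ Fin 2) ℂ)
    (h : ρ = Pg 2 2 * ρ * Pg 2 2) :
    (∀ a (j : Fin 2), ρ a (Sum.inr j) = 0) ∧ (∀ (j : Fin 2) a, ρ (Sum.inr j) a = 0) := by
  constructor
  · intro a j
    conv_lhs => rw [h]
    simp [Pg, Matrix.mul_diagonal]
  · intro j a
    conv_lhs => rw [h]
    simp [Pg, Matrix.diagonal_mul]

lemma jump_conjT (i j : Fin 2) :
    (jump 2 2 i j)ᴴ = Matrix.single (Sum.inr j) (Sum.inl i) 1 := by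
  ext a b
  simp [jump, Matrix.single, Matrix.conjTranspose_apply, and_comm]


lemma jump_mul (ρ : Matrix (Fin 2 ⊕ Fin 2) (Fin 2 ⊕ Fin 2) ℂ)
    (h : ∀ (j : Fin 2) a, ρ (Sum.inr j) a = 0) (i j : Fin 2) :
    jump 2 2 i j * ρ = 0 := by
  ext a b
  rcases eq_or_ne a (Sum.inl i) with rfl | hne
  · simp [jump, h]
  · simp [jump, Matrix.single_mul_apply_of_ne (h := hne)]

lemma mul_jumpT (ρ : Matrix (Fin 2 ⊕ Fin 2) (Fin 2 ⊕ Fin 2) ℂ)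
    (h : ∀ a (j : Fin 2), ρ a (Sum.inr j) = 0) (i j : Fin 2) :
    ρ * (jump 2 2 i j)ᴴ = 0 := by
  rw [jump_conjT]
  ext a b
  rcases eq_or_ne b (Sum.inl i) with rfl | hne
  · simp [h]
  · simp [Matrix.mul_single_apply_of_ne (hbj := hne)]

lemma jumpT_jump (i j : Fin 2) :
    (jump 2 2 i j)ᴴ * jump 2 2 i j = Matrix.single (Sum.inr j) (Sum.inr j) 1 := by
  rw [jump_conjT, jump, Matrix.single_mul_single_same, one_mul]

lemma num_mul_ρ (ρ : Matrix (Fin 2 ⊕ Fin 2) (Fin 2 ⊕ Fin 2) ℂ)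
    (h : ∀ (j : Fin 2) a, ρ (Sum.inr j) a = 0) (i j : Fin 2) :
    (jump 2 2 i j)ᴴ * jump 2 2 i j * ρ = 0 := by
  rw [jumpT_jump]
  ext a b
  rcases eq_or_ne a (Sum.inr j) with rfl | hne
  · simp [h]
  · simp [Matrix.single_mul_apply_of_ne (h := hne)]

lemma ρ_mul_num (ρ : Matrix (Fin 2 ⊕ Fin 2) (Fin 2 ⊕ Fin 2) ℂ)
    (h : ∀ a (j : Fin 2), ρ a (Sum.inr j) = 0) (i j : Fin 2) :
    ρ * ((jump 2 2 i j)ᴴ * jump 2 2 i j) = 0 := by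
  rw [jumpT_jump]
  ext a b
  rcases eq_or_ne b (Sum.inr j) with rfl | hne
  · simp [h]
  · simp [Matrix.mul_single_apply_of_ne (hbj := hne)]
lemma lindblad_supported_s14 (H : Matrix (Fin 2 ⊕ Fin 2) (Fin 2 ⊕ Fin 2) ℂ)
    (γ : Fin 2 → Fin 2 → ℝ) (ρ : Matrix (Fin 2 ⊕ Fin 2) (Fin 2 ⊕ Fin 2) ℂ)
    (hcol : ∀ a (j : Fin 2), ρ a (Sum.inr j) = 0)
    (hrow : ∀ (j : Fin 2) a, ρ (Sum.inr j) a = 0) :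
    Lindblad 2 2 H γ ρ = (-Complex.I) • (H * ρ - ρ * H) := by
  unfold Lindblad
  rw [add_eq_left]
  refine Finset.sum_eq_zero fun i _ => Finset.sum_eq_zero fun j _ => ?_
  rw [jump_mul ρ hrow i j, num_mul_ρ ρ hrow i j, ρ_mul_num ρ hcol i j]
  simp

lemma exists_dark_of_kernel_normalized (H : Matrix (Fin 2 ⊕ Fin 2) (Fin 2 ⊕ Fin 2) ℂ)
    (V : Fin 2 → Fin 2 → ℂ)
    (hgg : ∀ i i' : Fin 2, H (Sum.inl i) (Sum.inl i') = 0)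
    (hge : ∀ i j : Fin 2, H (Sum.inl i) (Sum.inr j) = V i j)
    (heg : ∀ i j : Fin 2, H (Sum.inr j) (Sum.inl i) = starRingEnd ℂ (V i j))
    (γ : Fin 2 → Fin 2 → ℝ)
    (c : Fin 2 → ℂ)
    (hnorm : c 0 * starRingEnd ℂ (c 0) + c 1 * starRingEnd ℂ (c 1) = 1)
    (hker : ∀ j, starRingEnd ℂ (V 0 j) * c 0 + starRingEnd ℂ (V 1 j) * c 1 = 0) :
    ∃ ρ : Matrix (Fin 2 ⊕ Fin 2) (Fin 2 ⊕ Fin 2) ℂ, IsDarkState 2 2 H γ ρ := by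
  have hker' : ∀ j, V 0 j * starRingEnd ℂ (c 0) + V 1 j * starRingEnd ℂ (c 1) = 0 := by
    intro j
    have := congrArg (starRingEnd ℂ) (hker j)
    simpa [mul_comm] using this
  set u : (Fin 2 ⊕ Fin 2) → ℂ := Sum.elim c (fun _ => 0) with hudef
  set ρ : Matrix (Fin 2 ⊕ Fin 2) (Fin 2 ⊕ Fin 2) ℂ :=
    Matrix.of (fun a b => u a * starRingEnd ℂ (u b)) with hρdef
  have hcol : ∀ a (j : Fin 2), ρ a (Sum.inr j) = 0 := by intro a j; simp [hρdef, hudef]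
  have hrow : ∀ (j : Fin 2) a, ρ (Sum.inr j) a = 0 := by intro j a; simp [hρdef, hudef]
  refine ⟨ρ, ?_, ?_, ?_, ?_⟩
  · have : ρ = (Matrix.of (fun a (_ : Fin 1) => u a)) * (Matrix.of (fun a (_ : Fin 1) => u a))ᴴ := by
      ext a b
      simp [hρdef, Matrix.mul_apply, Matrix.conjTranspose_apply]
    rw [this]
    exact Matrix.posSemidef_self_mul_conjTranspose _
  · simp only [Matrix.trace, Matrix.diag, Fintype.sum_sum_type, Fin.sum_univ_two,
      hρdef, Matrix.of_apply, hudef, Sum.elim_inl, Sum.elim_inr, mul_zero, map_zero, add_zero]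
    exact hnorm
  · rw [lindblad_supported_s14 H γ ρ hcol hrow]
    have hcomm : H * ρ = ρ * H := by
      ext a b
      rcases a with i | j <;> rcases b with i' | j' <;>
        simp only [Matrix.mul_apply, Fintype.sum_sum_type, Fin.sum_univ_two, hρdef,
          Matrix.of_apply, hudef, Sum.elim_inl, Sum.elim_inr, hgg, hge, heg,
          mul_zero, zero_mul, map_zero, add_zero, zero_add]
      · linear_combination (-(c i)) * hker' j'
      · linear_combination (starRingEnd ℂ (c i')) * hker j
    rw [hcomm]
    simp
  · ext a b
    rcases a with i | j <;> rcases b with i' | j' <;>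
      simp [Pg, hρdef, hudef, Matrix.mul_diagonal, Matrix.diagonal_mul]

lemma exists_dark_of_kernel (H : Matrix (Fin 2 ⊕ Fin 2) (Fin 2 ⊕ Fin 2) ℂ)
    (V : Fin 2 → Fin 2 → ℂ)
    (hgg : ∀ i i' : Fin 2, H (Sum.inl i) (Sum.inl i') = 0)
    (hge : ∀ i j : Fin 2, H (Sum.inl i) (Sum.inr j) = V i j)
    (heg : ∀ i j : Fin 2, H (Sum.inr j) (Sum.inl i) = starRingEnd ℂ (V i j))
    (γ : Fin 2 → Fin 2 → ℝ)
    (c : Fin 2 → ℂ) (hc : c 0 ≠ 0 ∨ c 1 ≠ 0)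
    (hker : ∀ j, starRingEnd ℂ (V 0 j) * c 0 + starRingEnd ℂ (V 1 j) * c 1 = 0) :
    ∃ ρ : Matrix (Fin 2 ⊕ Fin 2) (Fin 2 ⊕ Fin 2) ℂ, IsDarkState 2 2 H γ ρ := by
  have hS : 0 < Complex.normSq (c 0) + Complex.normSq (c 1) := by
    rcases hc with h | h
    · exact add_pos_of_pos_of_nonneg (Complex.normSq_pos.mpr h) (Complex.normSq_nonneg _)
    · exact add_pos_of_nonneg_of_pos (Complex.normSq_nonneg _) (Complex.normSq_pos.mpr h)
  set n : ℝ := Real.sqrt (Complex.normSq (c 0) + Complex.normSq (c 1)) with hndef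
  have hn : 0 < n := Real.sqrt_pos.mpr hS
  have hnC : (n : ℂ) ≠ 0 := Complex.ofReal_ne_zero.mpr hn.ne'
  have hnn : (n : ℂ) * (n : ℂ) = (Complex.normSq (c 0) : ℂ) + (Complex.normSq (c 1) : ℂ) := by
    norm_cast
    rw [hndef, Real.mul_self_sqrt hS.le]
  refine exists_dark_of_kernel_normalized H V hgg hge heg γ (fun i => c i * (n : ℂ)⁻¹) ?_ ?_
  · have h0 := Complex.mul_conj (c 0)
    have h1 := Complex.mul_conj (c 1)
    simp only [_root_.map_mul, map_inv₀, Complex.conj_ofReal]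
    field_simp
    linear_combination h0 + h1 - hnn
  · intro j
    have := hker j
    linear_combination (n : ℂ)⁻¹ * this


theorem dark_state_iff_rabi_condition_two_by_two
    (H : Matrix (Fin 2 ⊕ Fin 2) (Fin 2 ⊕ Fin 2) ℂ)
    (V : Fin 2 → Fin 2 → ℂ) (𝓔₃ 𝓔₄ : ℝ)
    (hgg : ∀ i i' : Fin 2, H (Sum.inl i) (Sum.inl i') = 0)
    (hge : ∀ i j : Fin 2, H (Sum.inl i) (Sum.inr j) = V i j)
    (heg : ∀ i j : Fin 2, H (Sum.inr j) (Sum.inl i) = starRingEnd ℂ (V i j))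
    (hee : ∀ j j' : Fin 2, j ≠ j' → H (Sum.inr j) (Sum.inr j') = 0)
    (hee0 : H (Sum.inr 0) (Sum.inr 0) = (𝓔₃ : ℂ))
    (hee1 : H (Sum.inr 1) (Sum.inr 1) = (𝓔₄ : ℂ))
    (γ : Fin 2 → Fin 2 → ℝ) (hγ : ∀ i j, 0 ≤ γ i j)
    (hγpos : ∀ j, 0 < ∑ i, γ i j) :
    (∃ ρ : Matrix (Fin 2 ⊕ Fin 2) (Fin 2 ⊕ Fin 2) ℂ,
        IsDarkState 2 2 H γ ρ) ↔ V 0 0 * V 1 1 = V 0 1 * V 1 0 := by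
  constructor
  · rintro ⟨ρ, hpsd, htr, hlin, hproj⟩
    obtain ⟨hcol, hrow⟩ := supp_of_proj ρ hproj
    have hcomm : H * ρ = ρ * H := by
      rw [lindblad_supported_s14 H γ ρ hcol hrow] at hlin
      rcases smul_eq_zero.mp hlin with h' | h'
      · exact absurd h' (by simp [Complex.I_ne_zero])
      · exact sub_eq_zero.mp h'
    have key : ∀ i j : Fin 2,
        ρ (Sum.inl i) (Sum.inl 0) * V 0 j + ρ (Sum.inl i) (Sum.inl 1) * V 1 j = 0 := by
      intro i j
      have h := congrFun (congrFun hcomm (Sum.inl i)) (Sum.inr j)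
      simp only [Matrix.mul_apply, Fintype.sum_sum_type, Fin.sum_univ_two, hge, hcol,
        mul_zero, zero_mul, add_zero, zero_add] at h
      linear_combination -h
    have htr' : ρ (Sum.inl 0) (Sum.inl 0) + ρ (Sum.inl 1) (Sum.inl 1) = 1 := by
      simpa [Matrix.trace, Matrix.diag, Fintype.sum_sum_type, Fin.sum_univ_two, hrow] using htr
    linear_combination V 1 1 * key 0 0 - V 1 0 * key 0 1 + V 0 0 * key 1 1 - V 0 1 * key 1 0 -
      (V 0 0 * V 1 1 - V 0 1 * V 1 0) * htr'
  · intro hcond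
    have hc' := congrArg (starRingEnd ℂ) hcond
    simp only [_root_.map_mul] at hc'
    by_cases h1 : V 0 1 = 0 ∧ V 1 1 = 0
    · by_cases h2 : V 0 0 = 0 ∧ V 1 0 = 0
      · refine exists_dark_of_kernel H V hgg hge heg γ ![1, 0] (Or.inl one_ne_zero) ?_
        intro j
        fin_cases j <;> simp [h1.1, h1.2, h2.1, h2.2]
      · refine exists_dark_of_kernel H V hgg hge heg γ
          ![starRingEnd ℂ (V 1 0), -(starRingEnd ℂ (V 0 0))] ?_ ?_
        · rcases not_and_or.mp h2 with h | h
          · right; simpa using h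
          · left; simpa using h
        · intro j
          fin_cases j <;> simp only [Fin.zero_eta, Fin.mk_one, Matrix.cons_val_zero, Matrix.cons_val_one, Matrix.head_cons]
          · ring
          · linear_combination -hc'
    · refine exists_dark_of_kernel H V hgg hge heg γ
        ![starRingEnd ℂ (V 1 1), -(starRingEnd ℂ (V 0 1))] ?_ ?_
      · rcases not_and_or.mp h1 with h | h
        · right; simpa using h
        · left; simpa using h
      · intro j
        fin_cases j <;> simp only [Fin.zero_eta, Fin.mk_one, Matrix.cons_val_zero, Matrix.cons_val_one, Matrix.head_cons]
        · linear_combination hc'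
        · ring
end

section
/- (Dark states of the fan/multipod system.) Let Ne = 1 and suppose the ground block of H is 𝓔·I (all Ng ground energies equal to a real number 𝓔), with couplings V i = H (inl i) (inr 1) ∈ ℂ and arbitrary real excited energy H (inr 1) (inr 1). For any unit vector ψ supported on the ground subspace (P ψ = ψ), with ground components c i = ψ (inl i), the pure state ψψᴴ is a dark state — L(ψψᴴ) = 0 and ψψᴴ = P(ψψᴴ)P — if and only if Σ_i conj(V i) · c i = 0. -/
open Matrix Complex BigOperators ComplexOrder

theorem fan_system_dark_state_iff
    (Ng : ℕ) (hNg : 1 ≤ Ng)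
    (H : Matrix (Fin Ng ⊕ Fin 1) (Fin Ng ⊕ Fin 1) ℂ) (hH : H.IsHermitian)
    (𝓔 : ℝ)
    (hgg : ∀ i i' : Fin Ng,
      H (Sum.inl i) (Sum.inl i') = if i = i' then (𝓔 : ℂ) else 0)
    (γ : Fin Ng → ℝ) (hγ : ∀ i, 0 ≤ γ i) (hγpos : 0 < ∑ i, γ i)
    (ψ : Fin Ng ⊕ Fin 1 → ℂ) (hunit : star ψ ⬝ᵥ ψ = 1)
    (hψP : Pg Ng 1 *ᵥ ψ = ψ) :
    (Lindblad Ng 1 H (fun i _ => γ i) (vecMulVec ψ (star ψ)) = 0 ∧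
      vecMulVec ψ (star ψ) = Pg Ng 1 * vecMulVec ψ (star ψ) * Pg Ng 1) ↔
    ∑ i, starRingEnd ℂ (H (Sum.inl i) (Sum.inr 0)) * ψ (Sum.inl i) = 0 := by
  classical
  set ρ := vecMulVec ψ (star ψ) with hρ
  have hinr : ∀ j : Fin 1, ψ (Sum.inr j) = 0 := by
    intro j
    have h := congrFun hψP (Sum.inr j)
    simpa [Pg, Matrix.mulVec_diagonal] using h.symm
  have hρ_apply : ∀ a b, ρ a b = ψ a * starRingEnd ℂ (ψ b) := by
    intro a b; simp [hρ, vecMulVec_apply]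
  -- support condition holds unconditionally
  have hsupp : ρ = Pg Ng 1 * ρ * Pg Ng 1 := by
    ext a b
    rcases a with a | a <;> rcases b with b | b <;>
      simp [Pg, Matrix.mul_diagonal, Matrix.diagonal_mul, hρ_apply, hinr]
  -- jump * ρ = 0 and ρ * jumpᴴ = 0
  have hjρ : ∀ (i : Fin Ng) (j : Fin 1), jump Ng 1 i j * ρ = 0 := by
    intro i j; ext a b
    rcases eq_or_ne a (Sum.inl i) with rfl | h
    · simp [jump, hρ_apply, hinr]
    · simp [jump, Matrix.single_mul_apply_of_ne _ _ _ _ _ h]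
  have hρj : ∀ (i : Fin Ng) (j : Fin 1), ρ * (jump Ng 1 i j)ᴴ = 0 := by
    intro i j; ext a b
    have : (jump Ng 1 i j)ᴴ = Matrix.single (Sum.inr j) (Sum.inl i) 1 := by
      ext a b
      simp [jump, Matrix.conjTranspose_apply, Matrix.single, and_comm]
    rw [this]
    rcases eq_or_ne b (Sum.inl i) with rfl | h
    · simp [hρ_apply, hinr]
    · simp [Matrix.mul_single_apply_of_ne _ _ _ _ _ h]
  -- dissipator vanishes
  have hdiss : ∀ (i : Fin Ng) (j : Fin 1),
      jump Ng 1 i j * ρ * (jump Ng 1 i j)ᴴ -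
        (1 / 2 : ℂ) • ((jump Ng 1 i j)ᴴ * jump Ng 1 i j * ρ +
          ρ * ((jump Ng 1 i j)ᴴ * jump Ng 1 i j)) = 0 := by
    intro i j
    rw [hjρ, Matrix.mul_assoc, hjρ, ← Matrix.mul_assoc, hρj]
    simp
  have hLin : Lindblad Ng 1 H (fun i _ => γ i) ρ = (-Complex.I) • (H * ρ - ρ * H) := by
    unfold Lindblad
    rw [Finset.sum_eq_zero, add_zero]
    intro i _
    rw [Finset.sum_eq_zero]
    intro j _
    rw [hdiss]; simp
  have hcomm_iff : (Lindblad Ng 1 H (fun i _ => γ i) ρ = 0) ↔ H * ρ - ρ * H = 0 := by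
    rw [hLin, smul_eq_zero]
    simp [Complex.I_ne_zero]
  -- Hermitian relation
  have hHsym : ∀ a b, H a b = starRingEnd ℂ (H b a) := by
    intro a b
    conv_lhs => rw [← hH]
    simp [Matrix.conjTranspose_apply]
  constructor
  · rintro ⟨hL, -⟩
    rw [hcomm_iff] at hL
    -- find nonzero ground component
    have hex : ∃ i', ψ (Sum.inl i') ≠ 0 := by
      by_contra h; push_neg at h
      have hz : ψ = 0 := by
        funext a; rcases a with a | a
        · exact h a
        · exact hinr a
      rw [hz] at hunit; simp at hunit
    obtain ⟨i', hi'⟩ := hex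
    have h0 := congrFun (congrFun hL (Sum.inr 0)) (Sum.inl i')
    simp only [Matrix.sub_apply, Matrix.mul_apply, Matrix.zero_apply] at h0
    have h1 : (∑ c, H (Sum.inr 0) c * ρ c (Sum.inl i')) = 0 := by
      rw [← h0]
      have : (∑ c, ρ (Sum.inr 0) c * H c (Sum.inl i')) = 0 := by
        apply Finset.sum_eq_zero; intro c _
        simp [hρ_apply, hinr]
      rw [this]; ring
    rw [Fintype.sum_sum_type] at h1
    simp only [hρ_apply, hinr, mul_zero, zero_mul, Finset.sum_const_zero, add_zero] at h1
    have h2 : (∑ i, starRingEnd ℂ (H (Sum.inl i) (Sum.inr 0)) * ψ (Sum.inl i)) *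
        starRingEnd ℂ (ψ (Sum.inl i')) = 0 := by
      rw [Finset.sum_mul]
      rw [← h1]
      apply Finset.sum_congr rfl
      intro i _
      rw [← hHsym]
      ring
    rcases mul_eq_zero.mp h2 with h | h
    · exact h
    · exact absurd h (by simpa using hi')
  · intro hS
    refine ⟨?_, hsupp⟩
    rw [hcomm_iff]
    -- H ψ = 𝓔 ψ
    have hHψ : ∀ a, (∑ c, H a c * ψ c) = (𝓔 : ℂ) * ψ a := by
      intro a
      rcases a with i | j
      · rw [Fintype.sum_sum_type]
        simp only [hinr, mul_zero, Finset.sum_const_zero, add_zero]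
        simp only [hgg]
        simp [ite_mul, Finset.sum_ite_eq]
      · have hj : j = 0 := Subsingleton.elim _ _
        subst hj
        rw [Fintype.sum_sum_type]
        simp only [hinr, mul_zero, Finset.sum_const_zero, add_zero]
        have : (∑ i, H (Sum.inr 0) (Sum.inl i) * ψ (Sum.inl i)) = 0 := by
          rw [← hS]
          apply Finset.sum_congr rfl
          intro i _
          rw [hHsym (Sum.inr 0) (Sum.inl i)]
        simp [this, hinr]
    ext a b
    simp only [Matrix.sub_apply, Matrix.mul_apply, Matrix.zero_apply]
    have hl : (∑ c, H a c * ρ c b) = (𝓔:ℂ) * ψ a * starRingEnd ℂ (ψ b) := by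
      calc (∑ c, H a c * ρ c b) = (∑ c, H a c * ψ c) * starRingEnd ℂ (ψ b) := by
            rw [Finset.sum_mul]; apply Finset.sum_congr rfl; intro c _; rw [hρ_apply]; ring
        _ = (𝓔:ℂ) * ψ a * starRingEnd ℂ (ψ b) := by rw [hHψ]
    have hr : (∑ c, ρ a c * H c b) = (𝓔:ℂ) * ψ a * starRingEnd ℂ (ψ b) := by
      calc (∑ c, ρ a c * H c b) = ψ a * starRingEnd ℂ (∑ c, H b c * ψ c) := by
            rw [map_sum, Finset.mul_sum]; apply Finset.sum_congr rfl; intro c _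
            rw [hρ_apply, hHsym c b]; simp [mul_comm, mul_left_comm]
        _ = (𝓔:ℂ) * ψ a * starRingEnd ℂ (ψ b) := by
            rw [hHψ]; simp; ring
    rw [hl, hr, sub_self]
end

section
/- Let H be a Hermitian complex n×n matrix and Γ a positive semidefinite complex n×n matrix, and suppose (H − i·Γ)·v = μ·v for a nonzero vector v and a complex number μ with Im μ = 0. Then Γ·v = 0 and H·v = μ·v; i.e. non-decaying eigenvectors of H − i·Γ lie in the kernel of Γ and are genuine eigenvectors of H. -/
open Matrix Complex BigOperators ComplexOrder

theorem real_eigenvalue_of_nonhermitian_lies_in_ker_Gamma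
    {n : Type*} [Fintype n] [DecidableEq n]
    (H Γ : Matrix n n ℂ) (hH : H.IsHermitian) (hΓ : Γ.PosSemidef)
    (μ : ℂ) (v : n → ℂ) (hv : v ≠ 0)
    (heig : (H - Complex.I • Γ) *ᵥ v = μ • v) (hμ : μ.im = 0) :
    Γ *ᵥ v = 0 ∧ H *ᵥ v = μ • v := by
  set a : ℂ := star v ⬝ᵥ H *ᵥ v with ha
  set b : ℂ := star v ⬝ᵥ Γ *ᵥ v with hb
  set s : ℂ := star v ⬝ᵥ v with hs
  -- a is real
  have haim : a.im = 0 := by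
    have : star a = a := by
      rw [ha, ← star_dotProduct, star_mulVec, hH.eq, dotProduct_mulVec]
    exact Complex.conj_eq_iff_im.mp this
  -- b is real and nonneg
  have hbnn : 0 ≤ b := hΓ.dotProduct_mulVec_nonneg v
  have hbim : b.im = 0 := by
    have := Complex.le_def.mp hbnn
    simpa using this.2.symm
  -- s is real
  have hsim : s.im = 0 := by
    have : (s : ℂ) = (∑ i, Complex.normSq (v i) : ℝ) := by
      simp only [hs, dotProduct]
      push_cast
      congr 1; ext i; rw [mul_comm]; exact Complex.mul_conj (v i)
    rw [this]; simp
  -- main equation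
  have key : a - Complex.I * b = μ * s := by
    have := congrArg (fun w => star v ⬝ᵥ w) heig
    simpa [sub_mulVec, smul_mulVec, dotProduct_sub, dotProduct_smul,
      smul_eq_mul, ha, hb, hs, mul_assoc] using this
  have him := congrArg Complex.im key
  simp [Complex.sub_im, Complex.mul_im, haim, hbim, hμ, hsim] at him
  -- him : b.re = 0
  have hb0 : b = 0 := by
    apply Complex.ext <;> simp [him, hbim]
  have hΓv : Γ *ᵥ v = 0 := (hΓ.dotProduct_mulVec_zero_iff v).mp hb0
  refine ⟨hΓv, ?_⟩
  have : (H - Complex.I • Γ) *ᵥ v = H *ᵥ v := by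
    simp [sub_mulVec, smul_mulVec, hΓv]
  rw [← this, heig]
end
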